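/- Suppose Assumption 1 (full rank) holds and that there exist real coefficients c_{i,d} ≥ 1 (one for each pair (i,d) with i ∈ {1,…,n} and d ∈ B_i) such that ∑_{i=1}^n ∑_{d∈B_i} c_{i,d} v_{i,d} = 0. Then Assumption 2 (no separation) holds, i.e., there is no nonzero β* ∈ ℝ^p with v_{i,d}'β* ≥ 0 for all i and all d ∈ B_i. (One direction of Theorem 2.) -/

import Mathlib

open scoped BigOperators RealInnerProductSpace

noncomputable section

/-- Real value of a binary indicator. -/
def bval (b : Bool) : ℝ := if b then 1 else 0

/-- The alternative set `B_i = {d ∈ {0,1}^T : ∑_t d_t = ∑_t Y_{it}}`. -/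
def altSet (T : ℕ) (Yi : Fin T → Bool) : Finset (Fin T → Bool) :=
  Finset.univ.filter fun d => (∑ t, (d t).toNat) = ∑ t, (Yi t).toNat

/-- The conditional log-likelihood `log L(β)`. -/
def logL {n T p : ℕ} (X : Fin n → Fin T → EuclideanSpace ℝ (Fin p))
    (Y : Fin n → Fin T → Bool) (β : EuclideanSpace ℝ (Fin p)) : ℝ :=
  ∑ i, ((∑ t, bval (Y i t) * ⟪X i t, β⟫) -
    Real.log (∑ d ∈ altSet T (Y i), Real.exp (∑ t, bval (d t) * ⟪X i t, β⟫)))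

/-- The conditional-logit (softmax) weights `w_i(d; β)`. -/
def cweight {n T p : ℕ} (X : Fin n → Fin T → EuclideanSpace ℝ (Fin p))
    (Y : Fin n → Fin T → Bool) (i : Fin n) (d : Fin T → Bool)
    (β : EuclideanSpace ℝ (Fin p)) : ℝ :=
  Real.exp (∑ t, bval (d t) * ⟪X i t, β⟫) /
    ∑ f ∈ altSet T (Y i), Real.exp (∑ t, bval (f t) * ⟪X i t, β⟫)

/-- Row index set of the matrix in Assumption 1: pairs `(i, d)` with `d ∈ B_i`. -/
abbrev RowIdx (n T : ℕ) (Y : Fin n → Fin T → Bool) :=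
  (i : Fin n) × {d : Fin T → Bool // d ∈ altSet T (Y i)}

/-- The matrix of Assumption 1, evaluated at `β`. -/
def rowMat {n T p : ℕ} (X : Fin n → Fin T → EuclideanSpace ℝ (Fin p))
    (Y : Fin n → Fin T → Bool) (β : EuclideanSpace ℝ (Fin p)) :
    Matrix (RowIdx n T Y) (Fin p) ℝ :=
  fun r k =>
    (∑ t, bval (r.2.1 t) * X r.1 t k) -
      ∑ e ∈ altSet T (Y r.1),
        cweight X Y r.1 e β * ∑ t, bval (e t) * X r.1 t k

/-- Assumption 1 (full rank). -/
def Assumption1 {n T p : ℕ} (X : Fin n → Fin T → EuclideanSpace ℝ (Fin p))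
    (Y : Fin n → Fin T → Bool) : Prop :=
  ∀ β : EuclideanSpace ℝ (Fin p), (rowMat X Y β).rank = p

/-- Assumption 2 (no separation). -/
def Assumption2 {n T p : ℕ} (X : Fin n → Fin T → EuclideanSpace ℝ (Fin p))
    (Y : Fin n → Fin T → Bool) : Prop :=
  ¬ ∃ βstar : EuclideanSpace ℝ (Fin p), βstar ≠ 0 ∧
      ∀ i, ∀ d ∈ altSet T (Y i),
        0 ≤ ∑ t, (bval (d t) - bval (Y i t)) * ⟪X i t, βstar⟫

/-- The vectors `v_{i,d} = ∑_t (d_t − Y_{it}) X_{it}`. -/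
def vvec {n T p : ℕ} (X : Fin n → Fin T → EuclideanSpace ℝ (Fin p))
    (Y : Fin n → Fin T → Bool) (i : Fin n) (d : Fin T → Bool) :
    EuclideanSpace ℝ (Fin p) :=
  ∑ t, (bval (d t) - bval (Y i t)) • X i t

/-- One direction of Theorem 2: coefficients `c_{i,d} ≥ 1` summing the `v_{i,d}` to zero
imply no separation. -/
theorem stmt4 {n T p : ℕ} (hn : 1 ≤ n) (hT : 1 ≤ T) (hp : 1 ≤ p)
    (X : Fin n → Fin T → EuclideanSpace ℝ (Fin p)) (Y : Fin n → Fin T → Bool)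
    (h1 : Assumption1 X Y)
    (c : RowIdx n T Y → ℝ) (hc : ∀ j, 1 ≤ c j)
    (hsum : ∑ j : RowIdx n T Y, c j • vvec X Y j.1 j.2.1 = 0) :
    Assumption2 X Y := by
  rintro ⟨β, hβ, hge⟩
  -- inner products of v with β
  have hv : ∀ (i : Fin n) (d : Fin T → Bool),
      ⟪vvec X Y i d, β⟫ = ∑ t, (bval (d t) - bval (Y i t)) * ⟪X i t, β⟫ := by
    intro i d
    rw [vvec, sum_inner]
    exact Finset.sum_congr rfl fun t _ => real_inner_smul_left _ _ _
  -- all inner products vanish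
  have hsum0 : ∑ j : RowIdx n T Y, c j * ⟪vvec X Y j.1 j.2.1, β⟫ = 0 := by
    have := congrArg (fun v : EuclideanSpace ℝ (Fin p) => ⟪v, β⟫) hsum
    simp only [sum_inner, real_inner_smul_left, inner_zero_left] at this
    exact this
  have hnonneg : ∀ j : RowIdx n T Y, 0 ≤ c j * ⟪vvec X Y j.1 j.2.1, β⟫ := by
    intro j
    have h0 := hge j.1 j.2.1 j.2.2
    rw [hv]
    exact mul_nonneg (le_trans zero_le_one (hc j)) h0
  have hzero : ∀ j : RowIdx n T Y, ⟪vvec X Y j.1 j.2.1, β⟫ = 0 := by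
    intro j
    have h := (Finset.sum_eq_zero_iff_of_nonneg (fun j' _ => hnonneg j')).mp hsum0 j
      (Finset.mem_univ j)
    have hcpos : (0:ℝ) < c j := lt_of_lt_of_le zero_lt_one (hc j)
    exact (mul_eq_zero.mp h).resolve_left (ne_of_gt hcpos)
  -- hence ∑_t d_t ⟪X,β⟫ is constant on altSet
  set S : Fin n → (Fin T → Bool) → ℝ := fun i d => ∑ t, bval (d t) * ⟪X i t, β⟫ with hS
  have hconst : ∀ j : RowIdx n T Y, S j.1 j.2.1 = S j.1 (Y j.1) := by
    intro j
    have := hzero j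
    rw [hv] at this
    have h' : S j.1 j.2.1 - S j.1 (Y j.1) = 0 := by
      rw [hS]
      simp only [← Finset.sum_sub_distrib, ← sub_mul]
      exact this
    linarith
  -- altSet is nonempty (contains Y i) and weights sum to 1
  have hmemY : ∀ i, Y i ∈ altSet T (Y i) := by
    intro i; simp [altSet]
  have hwsum : ∀ i : Fin n, ∑ e ∈ altSet T (Y i), cweight X Y i e β = 1 := by
    intro i
    have hden : 0 < ∑ f ∈ altSet T (Y i), Real.exp (∑ t, bval (f t) * ⟪X i t, β⟫) :=
      Finset.sum_pos (fun f _ => Real.exp_pos _) ⟨Y i, hmemY i⟩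
    rw [show ∑ e ∈ altSet T (Y i), cweight X Y i e β
        = (∑ e ∈ altSet T (Y i), Real.exp (∑ t, bval (e t) * ⟪X i t, β⟫)) /
          (∑ f ∈ altSet T (Y i), Real.exp (∑ t, bval (f t) * ⟪X i t, β⟫)) from by
      rw [Finset.sum_div]; rfl]
    exact div_self (ne_of_gt hden)
  -- the matrix kills β
  have hmul : (rowMat X Y β).mulVec (β : Fin p → ℝ) = 0 := by
    funext r
    have hrow : ∀ k, rowMat X Y β r k =
        (∑ t, bval (r.2.1 t) * X r.1 t k) -
          ∑ e ∈ altSet T (Y r.1), cweight X Y r.1 e β * ∑ t, bval (e t) * X r.1 t k :=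
      fun k => rfl
    have hip : ∀ t, (⟪X r.1 t, β⟫ : ℝ) = ∑ k, X r.1 t k * β k := by
      intro t
      simp [PiLp.inner_apply, RCLike.inner_apply]
      exact Finset.sum_congr rfl fun k _ => mul_comm _ _
    have hinner : ∀ d : Fin T → Bool,
        ∑ k, (∑ t, bval (d t) * X r.1 t k) * β k = S r.1 d := by
      intro d
      rw [hS]
      simp only [Finset.sum_mul]
      rw [Finset.sum_comm]
      refine Finset.sum_congr rfl fun t _ => ?_
      rw [hip, Finset.mul_sum]
      exact Finset.sum_congr rfl fun k _ => by ring
    have : (rowMat X Y β).mulVec (β : Fin p → ℝ) r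
        = S r.1 r.2.1 - ∑ e ∈ altSet T (Y r.1), cweight X Y r.1 e β * S r.1 e := by
      unfold Matrix.mulVec dotProduct
      simp only [hrow, sub_mul, Finset.sum_sub_distrib]
      congr 1
      · exact hinner r.2.1
      · simp only [Finset.sum_mul]
        rw [Finset.sum_comm]
        refine Finset.sum_congr rfl fun e he => ?_
        rw [← hinner e, Finset.mul_sum]
        exact Finset.sum_congr rfl fun k _ => by ring
    rw [this]
    have he0 : ∀ e ∈ altSet T (Y r.1), cweight X Y r.1 e β * S r.1 e
        = cweight X Y r.1 e β * S r.1 (Y r.1) := by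
      intro e he
      rw [hconst ⟨r.1, ⟨e, he⟩⟩]
    rw [Finset.sum_congr rfl he0, ← Finset.sum_mul, hwsum, one_mul,
      hconst r, Pi.zero_apply, sub_self]
  -- full rank ⇒ injective ⇒ β = 0, contradiction
  have hrank := h1 β
  have hker : LinearMap.ker (rowMat X Y β).mulVecLin = ⊥ := by
    have hrn := (rowMat X Y β).mulVecLin.finrank_range_add_finrank_ker
    rw [Matrix.rank] at hrank
    rw [hrank] at hrn
    have : Module.finrank ℝ (LinearMap.ker (rowMat X Y β).mulVecLin) = 0 := by
      have : Module.finrank ℝ (Fin p → ℝ) = p := by simp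
      omega
    exact Submodule.finrank_eq_zero.mp this
  have hβ0 : (β : Fin p → ℝ) = 0 := by
    have : (β : Fin p → ℝ) ∈ LinearMap.ker (rowMat X Y β).mulVecLin := hmul
    rwa [hker, Submodule.mem_bot] at this
  exact hβ (by ext k; exact congrFun hβ0 k)
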